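/- Let m ≥ 1 be a real number, n a natural number, and x, y : Fin n → ℝ two monotone nondecreasing finite sequences. Then for every permutation π of Fin n, Σᵢ |x i − y i|^m ≤ Σᵢ |x i − y (π i)|^m; i.e., the identity (sorted-order) matching minimizes the empirical m-th power transport cost between the two samples, so the empirical one-dimensional Wasserstein distance of order m is computed from the order statistics as Wₘ(p, q) = (Σᵢ |x⁽ⁱ⁾ − y⁽ⁱ⁾|^m)^{1/m}. -/

import Mathlib

open Finset

lemma convex_fourpoint {f : ℝ → ℝ} (hf : ConvexOn ℝ Set.univ f) {s p q t : ℝ}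
    (h1 : s ≤ p) (h2 : p ≤ t) (hpq : p + q = s + t) :
    f p + f q ≤ f s + f t := by
  rcases eq_or_lt_of_le (h1.trans h2) with hst | hst
  · have hp : p = s := le_antisymm (hst ▸ h2) h1
    have hq : q = t := by linarith
    rw [hp, hq]
  · set a := (t - p) / (t - s) with ha_def
    set b := (p - s) / (t - s) with hb_def
    have hts : 0 < t - s := by linarith
    have ha : 0 ≤ a := div_nonneg (by linarith) hts.le
    have hb : 0 ≤ b := div_nonneg (by linarith) hts.le
    have hab : a + b = 1 := by rw [ha_def, hb_def]; field_simp; ring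
    have hp : a * s + b * t = p := by rw [ha_def, hb_def]; field_simp; ring
    have hq : b * s + a * t = q := by rw [ha_def, hb_def]; field_simp; nlinarith
    have H1 := hf.2 (Set.mem_univ s) (Set.mem_univ t) ha hb hab
    have H2 := hf.2 (Set.mem_univ s) (Set.mem_univ t) hb ha (by linarith)
    simp only [smul_eq_mul] at H1 H2
    rw [hp] at H1
    rw [hq] at H2
    have e1 : a * f s + b * f s = f s := by rw [← add_mul, hab, one_mul]
    have e2 : a * f t + b * f t = f t := by rw [← add_mul, hab, one_mul]
    linarith

lemma convexOn_abs_rpow {m : ℝ} (hm : 1 ≤ m) :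
    ConvexOn ℝ Set.univ (fun t : ℝ => |t| ^ m) := by
  have himg : (fun t : ℝ => |t|) '' Set.univ = Set.Ici 0 := by
    rw [Set.image_univ]
    ext z
    simp only [Set.mem_range, Set.mem_Ici]
    constructor
    · rintro ⟨y, rfl⟩; exact abs_nonneg y
    · intro hz; exact ⟨z, abs_of_nonneg hz⟩
  have hg : ConvexOn ℝ ((fun t : ℝ => |t|) '' Set.univ) (fun x : ℝ => x ^ m) := by
    rw [himg]; exact convexOn_rpow hm
  have habs : ConvexOn ℝ Set.univ (fun t : ℝ => |t|) := by
    exact convexOn_univ_norm (E := ℝ)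
  have hmono : MonotoneOn (fun x : ℝ => x ^ m) ((fun t : ℝ => |t|) '' Set.univ) := by
    rw [himg]
    intro u hu v hv huv
    exact Real.rpow_le_rpow hu huv (by linarith)
  exact hg.comp habs hmono

lemma monge {m : ℝ} (hm : 1 ≤ m) {a a' b b' : ℝ} (ha : a ≤ a') (hb : b ≤ b') :
    |a - b| ^ m + |a' - b'| ^ m ≤ |a - b'| ^ m + |a' - b| ^ m := by
  have := convex_fourpoint (convexOn_abs_rpow hm)
    (s := a - b') (p := a - b) (q := a' - b') (t := a' - b)
    (by linarith) (by linarith) (by ring)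
  simpa using this

lemma transport_aux (m : ℝ) (hm : 1 ≤ m) (n : ℕ) (x y : Fin n → ℝ)
    (hx : Monotone x) (hy : Monotone y) :
    ∀ N : ℕ, ∀ π : Equiv.Perm (Fin n), π.support.card ≤ N →
      ∑ i, |x i - y i| ^ m ≤ ∑ i, |x i - y (π i)| ^ m := by
  intro N
  induction N with
  | zero =>
    intro π hπ
    have : π = 1 := by
      rwa [Nat.le_zero, Finset.card_eq_zero, Equiv.Perm.support_eq_empty_iff] at hπ
    simp [this]
  | succ N ih =>
    intro π hπ
    by_cases h1 : π = 1
    · simp [h1]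
    · have hne : π.support.Nonempty := by
        rw [Finset.nonempty_iff_ne_empty]
        intro h
        exact h1 (Equiv.Perm.support_eq_empty_iff.mp h)
      set i := π.support.max' hne with hi_def
      have hi : i ∈ π.support := π.support.max'_mem hne
      have hpii : π i ≠ i := Equiv.Perm.mem_support.mp hi
      have hπi_mem : π i ∈ π.support := Equiv.Perm.apply_mem_support.mpr hi
      have hπi_lt : π i < i := lt_of_le_of_ne (π.support.le_max' _ hπi_mem) hpii
      set k := π⁻¹ i with hk_def
      have hpk : π k = i := π.apply_symm_apply i
      have hk_mem : k ∈ π.support := by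
        rw [Equiv.Perm.mem_support, hpk]
        intro h
        exact hpii (by rw [h, hpk]; exact h)
      have hki : k ≠ i := by
        intro h
        exact hpii (by rw [← h, hpk]; exact h.symm)
      have hk_lt : k < i := lt_of_le_of_ne (π.support.le_max' _ hk_mem) hki
      set π' := π * Equiv.swap i k with hπ'_def
      have hπ'i : π' i = i := by
        rw [hπ'_def, Equiv.Perm.mul_apply, Equiv.swap_apply_left, hpk]
      have hπ'k : π' k = π i := by
        rw [hπ'_def, Equiv.Perm.mul_apply, Equiv.swap_apply_right]
      have hπ'other : ∀ j, j ≠ i → j ≠ k → π' j = π j := by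
        intro j hji hjk
        rw [hπ'_def, Equiv.Perm.mul_apply, Equiv.swap_apply_of_ne_of_ne hji hjk]
      -- support decreases
      have hsub : π'.support ⊆ π.support := by
        intro j hj
        rw [Equiv.Perm.mem_support] at hj ⊢
        by_cases hji : j = i
        · exact absurd (hji ▸ hπ'i) (hji ▸ hj)
        by_cases hjk : j = k
        · subst hjk; exact Equiv.Perm.mem_support.mp hk_mem
        · rwa [hπ'other j hji hjk] at hj
      have hssub : π'.support ⊂ π.support := by
        refine Finset.ssubset_iff_of_subset hsub |>.mpr ⟨i, hi, ?_⟩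
        rw [Equiv.Perm.mem_support]
        simp [hπ'i]
      have hcard : π'.support.card ≤ N :=
        Nat.lt_succ_iff.mp (lt_of_lt_of_le (Finset.card_lt_card hssub) hπ)
      have IH := ih π' hcard
      refine IH.trans ?_
      -- split sums over i, k, rest
      have hk_mem_erase : k ∈ Finset.univ.erase i := by
        simp [hki]
      have split : ∀ f : Fin n → ℝ, ∑ j, f j =
          f i + (f k + ∑ j ∈ (Finset.univ.erase i).erase k, f j) := by
        intro f
        rw [Finset.add_sum_erase _ f hk_mem_erase, Finset.add_sum_erase _ f (mem_univ i)]
      rw [split (fun j => |x j - y (π' j)| ^ m), split (fun j => |x j - y (π j)| ^ m)]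
      have hrest : ∑ j ∈ (Finset.univ.erase i).erase k, |x j - y (π' j)| ^ m =
          ∑ j ∈ (Finset.univ.erase i).erase k, |x j - y (π j)| ^ m := by
        apply Finset.sum_congr rfl
        intro j hj
        rw [Finset.mem_erase] at hj
        obtain ⟨hjk, hj2⟩ := hj
        rw [Finset.mem_erase] at hj2
        rw [hπ'other j hj2.1 hjk]
      rw [hrest, hπ'i, hπ'k]
      rw [hpk]
      have := monge hm (hx hk_lt.le) (hy hπi_lt.le) (a := x k) (a' := x i)
        (b := y (π i)) (b' := y i)
      linarith

/-- The sorted-order (identity) matching minimizes the empirical `m`-th power transport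
cost between two monotone samples: for monotone `x, y : Fin n → ℝ` and any permutation
`π`, `Σᵢ |xᵢ - yᵢ|^m ≤ Σᵢ |xᵢ - y_{π(i)}|^m`. -/
theorem sorted_matching_minimizes_transport_cost
    (m : ℝ) (hm : 1 ≤ m) (n : ℕ) (x y : Fin n → ℝ)
    (hx : Monotone x) (hy : Monotone y) (π : Equiv.Perm (Fin n)) :
    ∑ i, |x i - y i| ^ m ≤ ∑ i, |x i - y (π i)| ^ m :=
  transport_aux m hm n x y hx hy π.support.card π le_rfl
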